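/- Let L be a positive integer. Let G = (V,E) and G' = (V',E') be finite simple graphs whose vertices carry labels a_v = (x_v, r_v) and a'_{v'} = (x'_{v'}, r'_{v'}) respectively, and let v ∈ V, v' ∈ V'. Suppose the r-components are pairwise distinct on N_{L+1}(v) in G (i.e., r_s ≠ r_t for all distinct s,t ∈ N_{L+1}(v)) and pairwise distinct on N_{L+1}(v') in G'. If the level-(L+1) trees of the rooted balls coincide, T(R(G,v,L), v, L+1) = T(R(G',v',L), v', L+1), then (R(G,v,L), v) and (R(G',v',L), v') are isomorphic as rooted vertex-labeled graphs. -/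

import Mathlib

/-- `N_L(v)`: the set of vertices at graph distance at most `L` from `v`
(including `v` itself). -/
def ballSet {V : Type} (G : SimpleGraph V) (v : V) (L : ℕ) : Set V :=
  {u | G.edist v u ≤ (L : ℕ∞)}

theorem self_mem_ballSet {V : Type} (G : SimpleGraph V) (v : V) (L : ℕ) :
    v ∈ ballSet G v L := by
  simp only [ballSet, Set.mem_setOf_eq, SimpleGraph.edist_self]
  exact zero_le

noncomputable instance {V : Type} [Fintype V] (s : Set V) : Fintype ↥s :=
  (Set.toFinite s).fintype

/-- The type of level-`l` trees with labels in `A`. -/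
def TreeT (A : Type) : ℕ → Type
  | 0 => A
  | (l + 1) => TreeT A l × Multiset (TreeT A l)

open Classical in
/-- The level-`l` tree of `v` in `G` with vertex labels `a`:
`T(G, v, 0) = a_v` and `T(G, v, l) = (T(G, v, l−1), {T(G, u, l−1) : u ∈ N(v)})`
(the second component a multiset). -/
noncomputable def levelTree {V A : Type} [Fintype V] (G : SimpleGraph V) (a : V → A) :
    (l : ℕ) → V → TreeT A l
  | 0 => fun v => a v
  | (l + 1) => fun v =>
      (levelTree G a l v, (G.neighborFinset v).val.map (levelTree G a l))

def rootLabel {A : Type} : ∀ {l : ℕ}, TreeT A l → A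
  | 0, t => t
  | _ + 1, t => rootLabel t.1

open Classical in
lemma rootLabel_levelTree {V A : Type} [Fintype V] (G : SimpleGraph V) (a : V → A) :
    ∀ (l : ℕ) (u : V), rootLabel (levelTree G a l u) = a u
  | 0, u => rfl
  | l + 1, u => rootLabel_levelTree G a l u

open Classical in
lemma extract {V V' A : Type} [Fintype V] [Fintype V'] (G : SimpleGraph V)
    (G' : SimpleGraph V') (a : V → A) (a' : V' → A) {k : ℕ} {u : V} {u' : V'}
    (h : levelTree G a (k + 1) u = levelTree G' a' (k + 1) u') :
    a u = a' u' ∧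
      (G.neighborFinset u).val.map a = (G'.neighborFinset u').val.map a' := by
  rw [levelTree, levelTree] at h
  replace h : _ ∧ _ := Prod.ext_iff.mp h
  dsimp only at h
  obtain ⟨h1, h2⟩ := h
  constructor
  · rw [← rootLabel_levelTree G a k u, h1, rootLabel_levelTree]
  · have := congrArg (Multiset.map rootLabel) h2
    rw [Multiset.map_map, Multiset.map_map] at this
    simp only [Function.comp] at this
    rwa [Multiset.map_congr rfl (fun w _ => rootLabel_levelTree G a k w),
      Multiset.map_congr rfl (fun w _ => rootLabel_levelTree G' a' k w)] at this

open Classical in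
lemma step {V V' A : Type} [Fintype V] [Fintype V'] (G : SimpleGraph V)
    (G' : SimpleGraph V') (a : V → A) (a' : V' → A) {k : ℕ} {u n : V} {u' : V'}
    (h : levelTree G a (k + 1) u = levelTree G' a' (k + 1) u') (hn : G.Adj u n) :
    ∃ n', G'.Adj u' n' ∧ levelTree G a k n = levelTree G' a' k n' := by
  rw [levelTree, levelTree] at h
  replace h : _ ∧ _ := Prod.ext_iff.mp h
  dsimp only at h
  have hm : levelTree G a k n ∈ (G'.neighborFinset u').val.map (levelTree G' a' k) := by
    rw [← h.2]
    exact Multiset.mem_map_of_mem _ (by simpa using hn)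
  obtain ⟨n', hn', he⟩ := Multiset.mem_map.mp hm
  exact ⟨n', by simpa using hn', he.symm⟩

open Classical in
lemma mainKey {V V' A : Type} [Fintype V] [Fintype V'] (G : SimpleGraph V)
    (G' : SimpleGraph V') (a : V → A) (a' : V' → A) (L : ℕ) (v : V) (v' : V')
    (htree : levelTree (G.induce (ballSet G v L)) (fun u => a u.1) (L + 1)
        ⟨v, self_mem_ballSet G v L⟩ =
      levelTree (G'.induce (ballSet G' v' L)) (fun u => a' u.1) (L + 1)
        ⟨v', self_mem_ballSet G' v' L⟩)
    (u : ↥(ballSet G v L)) :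
    ∃ u' : ↥(ballSet G' v' L), a u.1 = a' u'.1 ∧
      ((G.induce (ballSet G v L)).neighborFinset u).val.map (fun w => a w.1) =
      ((G'.induce (ballSet G' v' L)).neighborFinset u').val.map (fun w => a' w.1) := by
  have claim : ∀ (d : ℕ) (hdL : d ≤ L) (w : V) (hw : G.edist v w = (d : ℕ∞)),
      ∃ u' : ↥(ballSet G' v' L),
        levelTree (G.induce (ballSet G v L)) (fun z => a z.1) (L - d + 1)
          ⟨w, by
            simp only [ballSet, Set.mem_setOf_eq, hw]
            exact_mod_cast hdL⟩ =
        levelTree (G'.induce (ballSet G' v' L)) (fun z => a' z.1) (L - d + 1) u' := by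
    intro d
    induction d with
    | zero =>
      intro _ w hw
      have hv : v = w := SimpleGraph.edist_eq_zero_iff (G := G).mp (by simpa using hw)
      subst hv
      exact ⟨⟨v', self_mem_ballSet G' v' L⟩, by simpa using htree⟩
    | succ d ih =>
      intro hd w hw
      obtain ⟨p, hp⟩ := SimpleGraph.exists_walk_of_edist_eq_coe hw
      set q := p.reverse with hq
      have hlen : q.length = d + 1 := by
        simp only [hq, SimpleGraph.Walk.length_reverse, hp]
      clear_value q
      cases q with
      | nil => simp at hlen
      | @cons _ b _ hadj q' =>
        simp only [SimpleGraph.Walk.length_cons, Nat.add_right_cancel_iff] at hlen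
        have hb1 : G.edist v b ≤ (d : ℕ∞) := by
          have := SimpleGraph.edist_le q'.reverse
          rwa [SimpleGraph.Walk.length_reverse, hlen] at this
        have hne : G.edist v b ≠ ⊤ := by
          exact ne_top_of_le_ne_top (ENat.coe_ne_top d) hb1
        lift G.edist v b to ℕ using hne with m hm
        have hm1 : m ≤ d := by exact_mod_cast hb1
        have hb2 : G.edist v b = (d : ℕ∞) := by
          have htri : G.edist v w ≤ G.edist v b + G.edist b w :=
            SimpleGraph.edist_triangle
          have hbw : G.edist b w = 1 := SimpleGraph.edist_eq_one_iff_adj.mpr hadj.symm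
          rw [hw, hbw, ← hm] at htri
          have : d + 1 ≤ m + 1 := by exact_mod_cast htri
          rw [← hm]
          congr 1
          omega
        obtain ⟨b', htb⟩ := ih (by omega) b hb2
        have hdepth : L - d + 1 = (L - (d + 1) + 1) + 1 := by omega
        rw [hdepth] at htb
        have hadjH : (G.induce (ballSet G v L)).Adj
            ⟨b, by simp only [ballSet, Set.mem_setOf_eq, hb2]; exact_mod_cast (by omega : d ≤ L)⟩
            ⟨w, by simp only [ballSet, Set.mem_setOf_eq, hw]; exact_mod_cast hd⟩ :=
          hadj.symm
        obtain ⟨u'', _, ht⟩ := step _ _ _ _ htb hadjH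
        exact ⟨u'', ht⟩
  have hne : G.edist v u.1 ≠ ⊤ := ne_top_of_le_ne_top (ENat.coe_ne_top L) u.2
  lift G.edist v u.1 to ℕ using hne with d hd
  have hdL : d ≤ L := by
    have : (d : ℕ∞) ≤ L := hd ▸ u.2
    exact_mod_cast this
  obtain ⟨u', ht⟩ := claim d hdL u.1 hd.symm
  obtain ⟨h1, h2⟩ := extract _ _ _ _ ht
  exact ⟨u', h1, h2⟩

/-- Let `L ≥ 1`, let `G, G'` be finite simple graphs with vertex labels
`a_v = (x_v, r_v)` (resp. `a'_{v'} = (x'_{v'}, r'_{v'})`), and let `v ∈ V`, `v' ∈ V'`.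
Suppose the `r`-components are pairwise distinct on `N_{L+1}(v)` and on `N_{L+1}(v')`.
If the level-`(L+1)` trees of the rooted balls coincide,
`T(R(G,v,L), v, L+1) = T(R(G',v',L), v', L+1)`, then `(R(G,v,L), v)` and
`(R(G',v',L), v')` are isomorphic as rooted vertex-labeled graphs. -/
theorem stmt_13 (L : ℕ) (hL : 0 < L) (X Rt : Type)
    (V V' : Type) [Fintype V] [Fintype V']
    (G : SimpleGraph V) (G' : SimpleGraph V')
    (x : V → X) (r : V → Rt) (x' : V' → X) (r' : V' → Rt)
    (v : V) (v' : V')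
    (hdist : ∀ s t, s ∈ ballSet G v (L + 1) → t ∈ ballSet G v (L + 1) →
      s ≠ t → r s ≠ r t)
    (hdist' : ∀ s t, s ∈ ballSet G' v' (L + 1) → t ∈ ballSet G' v' (L + 1) →
      s ≠ t → r' s ≠ r' t)
    (htree : levelTree (G.induce (ballSet G v L)) (fun u => (x u.1, r u.1)) (L + 1)
        ⟨v, self_mem_ballSet G v L⟩ =
      levelTree (G'.induce (ballSet G' v' L)) (fun u => (x' u.1, r' u.1)) (L + 1)
        ⟨v', self_mem_ballSet G' v' L⟩) :
    ∃ φ : (G.induce (ballSet G v L)) ≃g (G'.induce (ballSet G' v' L)),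
      (∀ u, x' (φ u).1 = x u.1 ∧ r' (φ u).1 = r u.1) ∧
      (φ ⟨v, self_mem_ballSet G v L⟩).1 = v' := by
  classical
  have hsub : ∀ u : V, u ∈ ballSet G v L → u ∈ ballSet G v (L + 1) := by
    intro u hu
    have h1 : G.edist v u ≤ (L : ℕ∞) := hu
    exact le_trans h1 (by exact_mod_cast Nat.le_succ L)
  have hsub' : ∀ u : V', u ∈ ballSet G' v' L → u ∈ ballSet G' v' (L + 1) := by
    intro u hu
    have h1 : G'.edist v' u ≤ (L : ℕ∞) := hu
    exact le_trans h1 (by exact_mod_cast Nat.le_succ L)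
  have rinj : ∀ u1 u2 : ↥(ballSet G v L), r u1.1 = r u2.1 → u1 = u2 := by
    intro u1 u2 h
    by_contra hne
    exact hdist u1.1 u2.1 (hsub _ u1.2) (hsub _ u2.2)
      (fun hh => hne (Subtype.ext hh)) h
  have rinj' : ∀ u1 u2 : ↥(ballSet G' v' L), r' u1.1 = r' u2.1 → u1 = u2 := by
    intro u1 u2 h
    by_contra hne
    exact hdist' u1.1 u2.1 (hsub' _ u1.2) (hsub' _ u2.2)
      (fun hh => hne (Subtype.ext hh)) h
  have hF := mainKey G G' (fun u => (x u, r u)) (fun u => (x' u, r' u)) L v v' htree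
  have hG := mainKey G' G (fun u => (x' u, r' u)) (fun u => (x u, r u)) L v' v htree.symm
  set f : ↥(ballSet G v L) → ↥(ballSet G' v' L) := fun u => (hF u).choose with hfdef
  set g : ↥(ballSet G' v' L) → ↥(ballSet G v L) := fun u => (hG u).choose with hgdef
  have hf1 : ∀ u, ((x u.1, r u.1) : X × Rt) = (x' (f u).1, r' (f u).1) :=
    fun u => (hF u).choose_spec.1
  have hf2 : ∀ u, ((G.induce (ballSet G v L)).neighborFinset u).val.map
        (fun w => ((x w.1, r w.1) : X × Rt)) =
      ((G'.induce (ballSet G' v' L)).neighborFinset (f u)).val.map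
        (fun w => (x' w.1, r' w.1)) :=
    fun u => (hF u).choose_spec.2
  have hg1 : ∀ u, ((x' u.1, r' u.1) : X × Rt) = (x (g u).1, r (g u).1) :=
    fun u => (hG u).choose_spec.1
  have hg2 : ∀ u, ((G'.induce (ballSet G' v' L)).neighborFinset u).val.map
        (fun w => ((x' w.1, r' w.1) : X × Rt)) =
      ((G.induce (ballSet G v L)).neighborFinset (g u)).val.map
        (fun w => (x w.1, r w.1)) :=
    fun u => (hG u).choose_spec.2
  have hfr : ∀ u, r' (f u).1 = r u.1 := fun u => (congrArg Prod.snd (hf1 u)).symm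
  have hfx : ∀ u, x' (f u).1 = x u.1 := fun u => (congrArg Prod.fst (hf1 u)).symm
  have hgr : ∀ u', r (g u').1 = r' u'.1 := fun u' => (congrArg Prod.snd (hg1 u')).symm
  have hgf : ∀ u, g (f u) = u := fun u => rinj _ _ (by rw [hgr, hfr])
  have hfg : ∀ u', f (g u') = u' := fun u' => rinj' _ _ (by rw [hfr, hgr])
  have push : ∀ u1 u2, (G.induce (ballSet G v L)).Adj u1 u2 →
      (G'.induce (ballSet G' v' L)).Adj (f u1) (f u2) := by
    intro u1 u2 h
    have hm : ((x u2.1, r u2.1) : X × Rt) ∈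
        ((G'.induce (ballSet G' v' L)).neighborFinset (f u1)).val.map
          (fun w => (x' w.1, r' w.1)) := by
      rw [← hf2 u1]
      exact Multiset.mem_map_of_mem _
        (by simpa [SimpleGraph.mem_neighborFinset] using h)
    obtain ⟨n', hn', he⟩ := Multiset.mem_map.mp hm
    have hn'e : n' = f u2 := by
      apply rinj'
      rw [hfr]
      exact congrArg Prod.snd he
    rw [← hn'e]
    have := Multiset.mem_toFinset.mpr hn'
    simpa [SimpleGraph.mem_neighborFinset] using (Finset.mem_def.mpr hn' :
      n' ∈ (G'.induce (ballSet G' v' L)).neighborFinset (f u1))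
  have push' : ∀ u1 u2, (G'.induce (ballSet G' v' L)).Adj u1 u2 →
      (G.induce (ballSet G v L)).Adj (g u1) (g u2) := by
    intro u1 u2 h
    have hm : ((x' u2.1, r' u2.1) : X × Rt) ∈
        ((G.induce (ballSet G v L)).neighborFinset (g u1)).val.map
          (fun w => (x w.1, r w.1)) := by
      rw [← hg2 u1]
      exact Multiset.mem_map_of_mem _
        (by simpa [SimpleGraph.mem_neighborFinset] using h)
    obtain ⟨n', hn', he⟩ := Multiset.mem_map.mp hm
    have hn'e : n' = g u2 := by
      apply rinj
      rw [hgr]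
      exact congrArg Prod.snd he
    rw [← hn'e]
    simpa [SimpleGraph.mem_neighborFinset] using (Finset.mem_def.mpr hn' :
      n' ∈ (G.induce (ballSet G v L)).neighborFinset (g u1))
  refine ⟨⟨⟨f, g, hgf, hfg⟩, ?_⟩, ?_, ?_⟩
  · intro u1 u2
    constructor
    · intro h
      have := push' _ _ h
      rwa [hgf, hgf] at this
    · exact push u1 u2
  · intro u
    exact ⟨hfx u, hfr u⟩
  · have hroot : ((x v, r v) : X × Rt) = (x' v', r' v') :=
      (extract _ _ _ _ (show levelTree (G.induce (ballSet G v L))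
          (fun u => ((x u.1, r u.1) : X × Rt)) (L + 1) ⟨v, self_mem_ballSet G v L⟩ =
        levelTree (G'.induce (ballSet G' v' L)) (fun u => (x' u.1, r' u.1)) (L + 1)
          ⟨v', self_mem_ballSet G' v' L⟩ from htree)).1
    have : f ⟨v, self_mem_ballSet G v L⟩ = ⟨v', self_mem_ballSet G' v' L⟩ := by
      apply rinj'
      rw [hfr]
      exact (congrArg Prod.snd hroot)
    exact congrArg Subtype.val this
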